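/- Let M be a length subset of a Hilbert space H (i.e., for all x ≠ y in M, d(x,y) equals the infimum of lengths of rectifiable curves in M joining them). If M is closed, then M is convex. -/

import Mathlib

open Metric Set

private lemma combo_norm_sq {H : Type*} [NormedAddCommGroup H] [InnerProductSpace ℝ H]
    (x y z : H) (a b : ℝ) (hab : a + b = 1) :
    ‖z - (a • x + b • y)‖ ^ 2 =
      a * ‖z - x‖ ^ 2 + b * ‖z - y‖ ^ 2 - a * b * ‖x - y‖ ^ 2 := by
  have hz : z - (a • x + b • y) = a • (z - x) + b • (z - y) := by
    have : z = (a + b) • z := by rw [hab, one_smul]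
    rw [smul_sub, smul_sub]
    nth_rewrite 1 [this]
    rw [add_smul]
    abel
  have hinner : 2 * (inner ℝ (z - x) (z - y) : ℝ) =
      ‖z - x‖ ^ 2 + ‖z - y‖ ^ 2 - ‖x - y‖ ^ 2 := by
    have h := @norm_sub_sq_real H _ _ (z - x) (z - y)
    have h2 : (z - x) - (z - y) = y - x := by abel
    rw [h2, norm_sub_rev y x] at h
    linarith
  rw [hz, @norm_add_sq_real H _ _]
  rw [norm_smul, norm_smul, real_inner_smul_left, real_inner_smul_right]
  have ha2 : ‖a‖ ^ 2 = a ^ 2 := by rw [Real.norm_eq_abs, sq_abs]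
  have hb2 : ‖b‖ ^ 2 = b ^ 2 := by rw [Real.norm_eq_abs, sq_abs]
  rw [mul_pow, mul_pow, ha2, hb2]
  linear_combination a * b * hinner + (a * ‖z - x‖ ^ 2 + b * ‖z - y‖ ^ 2) * hab

set_option maxHeartbeats 1000000 in
theorem stmt8 {H : Type*} [NormedAddCommGroup H] [InnerProductSpace ℝ H] [CompleteSpace H]
    (M : Set H) (hclosed : IsClosed M)
    (hlength : ∀ x ∈ M, ∀ y ∈ M, x ≠ y →
      ENNReal.ofReal (dist x y) =
        ⨅ (α : ℝ → H) (_ : ContinuousOn α (Set.Icc 0 1))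
          (_ : ∀ t ∈ Set.Icc (0 : ℝ) 1, α t ∈ M) (_ : α 0 = x) (_ : α 1 = y),
          eVariationOn α (Set.Icc 0 1)) :
    Convex ℝ M := by
  intro x hx y hy a b ha hb hab
  rcases eq_or_ne x y with rfl | hxy
  · have : a • x + b • x = x := by
      rw [← add_smul, hab, one_smul]
    rw [this]; exact hx
  obtain ⟨d, hd, hdpos⟩ : ∃ d, d = dist x y ∧ 0 < d :=
    ⟨_, rfl, dist_pos.mpr hxy⟩
  have ha1 : a ≤ 1 := by linarith
  have hb1 : b ≤ 1 := by linarith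
  have hmemcl : a • x + b • y ∈ closure M := by
    rw [Metric.mem_closure_iff]
    intro ε hε
    obtain ⟨δ, hδpos, hδ1, hδ2⟩ :
        ∃ δ, 0 < δ ∧ δ ≤ 1 ∧ (2 * d + 1) * δ < ε ^ 2 := by
      refine ⟨min 1 (ε ^ 2 / (2 * d + 2)), lt_min one_pos (by positivity),
        min_le_left _ _, ?_⟩
      have h1 : min 1 (ε ^ 2 / (2 * d + 2)) ≤ ε ^ 2 / (2 * d + 2) := min_le_right _ _
      have h2 : (2 * d + 1) * min 1 (ε ^ 2 / (2 * d + 2)) ≤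
          (2 * d + 1) * (ε ^ 2 / (2 * d + 2)) :=
        mul_le_mul_of_nonneg_left h1 (by linarith)
      have h3 : (2 * d + 1) * (ε ^ 2 / (2 * d + 2)) < ε ^ 2 := by
        rw [mul_comm, div_mul_eq_mul_div, div_lt_iff₀ (by linarith)]
        have hε2 : 0 < ε ^ 2 := pow_pos hε 2
        nlinarith
      linarith
    -- get a curve of length < d + δ
    have hlt : (⨅ (α : ℝ → H) (_ : ContinuousOn α (Set.Icc 0 1))
          (_ : ∀ t ∈ Set.Icc (0 : ℝ) 1, α t ∈ M) (_ : α 0 = x) (_ : α 1 = y),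
          eVariationOn α (Set.Icc 0 1)) < ENNReal.ofReal (d + δ) := by
      rw [← hlength x hx y hy hxy, ← hd]
      exact ENNReal.ofReal_lt_ofReal_iff (by linarith) |>.mpr (by linarith)
    simp only [iInf_lt_iff] at hlt
    obtain ⟨α, hcont, hmem, hα0, hα1, hvar⟩ := hlt
    -- find s with dist x (α s) = b * d by IVT
    have hgc : ContinuousOn (fun s => dist x (α s)) (Icc (0:ℝ) 1) :=
      (continuous_const.dist continuous_id).comp_continuousOn hcont
    have hsub : Icc (dist x (α 0)) (dist x (α 1)) ⊆
        (fun s => dist x (α s)) '' Icc (0:ℝ) 1 :=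
      intermediate_value_Icc zero_le_one hgc
    have hbd_mem : b * d ∈ Icc (dist x (α 0)) (dist x (α 1)) := by
      rw [hα0, hα1, dist_self, ← hd]
      constructor
      · positivity
      · nlinarith
    obtain ⟨s, hs, hgs⟩ := hsub hbd_mem
    have hzM : α s ∈ M := hmem s hs
    have hdxz : dist x (α s) = b * d := hgs
    -- length bound
    have key : dist x (α s) + dist (α s) y < d + δ := by
      have e1 : edist x (α s) ≤ eVariationOn α (Icc 0 s) := by
        rw [← hα0]
        exact eVariationOn.edist_le α ⟨le_refl 0, hs.1⟩ ⟨hs.1, le_refl s⟩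
      have e2 : edist (α s) y ≤ eVariationOn α (Icc s 1) := by
        rw [← hα1]
        exact eVariationOn.edist_le α ⟨le_refl s, hs.2⟩ ⟨hs.2, le_refl 1⟩
      have eadd : eVariationOn α (Icc 0 s) + eVariationOn α (Icc s 1) =
          eVariationOn α (Icc 0 1) := by
        have h := eVariationOn.Icc_add_Icc α (s := Icc (0:ℝ) 1) hs.1 hs.2 hs
        rw [Icc_inter_Icc, Icc_inter_Icc, Icc_inter_Icc] at h
        simpa [max_self, min_self, max_eq_right hs.1, min_eq_right hs.2] using h
      have esum : edist x (α s) + edist (α s) y < ENNReal.ofReal (d + δ) :=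
        lt_of_le_of_lt (le_trans (add_le_add e1 e2) eadd.le) hvar
      have h4 : ENNReal.ofReal (dist x (α s) + dist (α s) y) <
          ENNReal.ofReal (d + δ) := by
        rw [ENNReal.ofReal_add dist_nonneg dist_nonneg, ← edist_dist, ← edist_dist]
        exact esum
      exact (ENNReal.ofReal_lt_ofReal_iff_of_nonneg (by positivity)).mp h4
    have hdzy : dist (α s) y < a * d + δ := by
      rw [hdxz] at key; nlinarith
    refine ⟨α s, hzM, ?_⟩
    have hid := combo_norm_sq x y (α s) a b hab
    have hzx : ‖α s - x‖ = dist x (α s) := by rw [dist_comm, dist_eq_norm]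
    have hzy : ‖α s - y‖ = dist (α s) y := by rw [dist_eq_norm]
    have hxyn : ‖x - y‖ = d := by rw [hd, dist_eq_norm]
    have hsq : ‖α s - (a • x + b • y)‖ ^ 2 < ε ^ 2 := by
      rw [hid, hzx, hzy, hxyn, hdxz]
      have h1 : dist (α s) y ^ 2 ≤ (a * d + δ) ^ 2 :=
        pow_le_pow_left₀ dist_nonneg hdzy.le 2
      have h2 : b * dist (α s) y ^ 2 ≤ b * (a * d + δ) ^ 2 :=
        mul_le_mul_of_nonneg_left h1 hb
      have e3 : a * (b * d) ^ 2 + b * (a * d + δ) ^ 2 - a * b * d ^ 2 =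
          b * (2 * a * d * δ + δ ^ 2) + a * b * d ^ 2 * (a + b - 1) := by ring
      rw [hab] at e3
      have t1 : 2 * a * d * δ + δ ^ 2 ≤ 2 * d * δ + δ ^ 2 := by
        nlinarith [mul_nonneg (mul_nonneg (sub_nonneg.mpr ha1) hdpos.le) hδpos.le]
      have t2 : (0:ℝ) ≤ 2 * a * d * δ + δ ^ 2 := by positivity
      have e4 : b * (2 * a * d * δ + δ ^ 2) ≤ 2 * d * δ + δ ^ 2 := by
        nlinarith [mul_nonneg (sub_nonneg.mpr hb1) t2]
      have e5 : 2 * d * δ + δ ^ 2 ≤ (2 * d + 1) * δ := by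
        nlinarith [mul_nonneg hδpos.le (sub_nonneg.mpr hδ1)]
      linarith
    have hnp : dist (a • x + b • y) (α s) = ‖α s - (a • x + b • y)‖ := by
      rw [dist_comm, dist_eq_norm]
    rw [hnp]
    exact lt_of_pow_lt_pow_left₀ 2 hε.le hsq
  exact hclosed.closure_subset hmemcl
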